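/- Let K be a field. Let SL(2, K) act on pairs (f, v), where f : K² → K is a linear functional and v ∈ K², by g · (f, v) = (f ∘ g⁻¹, g v). For f ≠ 0 with f(v) = 0, write t(f, v) for the unique scalar with v = t(f, v) · (f(e₂), −f(e₁)) (here e₁, e₂ is the standard basis of K²; the vector (f(e₂), −f(e₁)) spans ker f). Then two pairs (f, v) and (f', v') lie in the same SL(2, K)-orbit if and only if: (f = 0 ↔ f' = 0), (v = 0 ↔ v' = 0), f(v) = f'(v'), and moreover, in the case f ≠ 0 and f(v) = 0, additionally t(f, v) = t(f', v'). -/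

import Mathlib

open Matrix LinearMap

namespace SL2Aux

variable {K : Type*} [Field K]

local notation "SL2" => Matrix.SpecialLinearGroup (Fin 2) K

lemma eval2 (f : (Fin 2 → K) →ₗ[K] K) (x : Fin 2 → K) :
    f x = x 0 * f (Pi.single 0 1) + x 1 * f (Pi.single 1 1) := by
  have hx : x = x 0 • (Pi.single 0 1 : Fin 2 → K) + x 1 • (Pi.single 1 1 : Fin 2 → K) := by
    funext i; fin_cases i <;> simp
  conv_lhs => rw [hx]
  simp [map_add, _root_.map_smul, smul_eq_mul]

lemma ext2 {f h : (Fin 2 → K) →ₗ[K] K}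
    (h0 : f (Pi.single 0 1) = h (Pi.single 0 1))
    (h1 : f (Pi.single 1 1) = h (Pi.single 1 1)) : f = h := by
  refine LinearMap.ext fun x => ?_
  rw [eval2 f, eval2 h, h0, h1]

/-- The orbit relation. -/
def Rel (f f' : (Fin 2 → K) →ₗ[K] K) (v v' : Fin 2 → K) : Prop :=
  ∃ g : SL2, f' = f ∘ₗ Matrix.toLin' ((g⁻¹ : SL2) : Matrix (Fin 2) (Fin 2) K) ∧
    v' = Matrix.mulVec (g : Matrix (Fin 2) (Fin 2) K) v

lemma comp_cancel (g : SL2) (f : (Fin 2 → K) →ₗ[K] K) :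
    (f ∘ₗ Matrix.toLin' ((g⁻¹ : SL2) : Matrix (Fin 2) (Fin 2) K)) ∘ₗ
      Matrix.toLin' (g : Matrix (Fin 2) (Fin 2) K) = f := by
  rw [LinearMap.comp_assoc, ← Matrix.toLin'_mul]
  have : ((g⁻¹ : SL2) : Matrix (Fin 2) (Fin 2) K) * (g : Matrix (Fin 2) (Fin 2) K) = 1 := by
    rw [← Matrix.SpecialLinearGroup.coe_mul, inv_mul_cancel,
      Matrix.SpecialLinearGroup.coe_one]
  rw [this, Matrix.toLin'_one, LinearMap.comp_id]

lemma comp_cancel' (g : SL2) (f : (Fin 2 → K) →ₗ[K] K) :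
    (f ∘ₗ Matrix.toLin' ((g : SL2) : Matrix (Fin 2) (Fin 2) K)) ∘ₗ
      Matrix.toLin' ((g⁻¹ : SL2) : Matrix (Fin 2) (Fin 2) K) = f := by
  have := comp_cancel g⁻¹ f
  rwa [inv_inv] at this

lemma rel_refl (f : (Fin 2 → K) →ₗ[K] K) (v : Fin 2 → K) : Rel f f v v := by
  refine ⟨1, ?_, ?_⟩
  · rw [inv_one, Matrix.SpecialLinearGroup.coe_one, Matrix.toLin'_one, LinearMap.comp_id]
  · rw [Matrix.SpecialLinearGroup.coe_one, Matrix.one_mulVec]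

lemma rel_symm {f f' : (Fin 2 → K) →ₗ[K] K} {v v' : Fin 2 → K}
    (h : Rel f f' v v') : Rel f' f v' v := by
  obtain ⟨g, hf, hv⟩ := h
  refine ⟨g⁻¹, ?_, ?_⟩
  · rw [inv_inv, hf, comp_cancel]
  · rw [hv, Matrix.mulVec_mulVec, ← Matrix.SpecialLinearGroup.coe_mul, inv_mul_cancel,
      Matrix.SpecialLinearGroup.coe_one, Matrix.one_mulVec]

lemma rel_trans {f f' f'' : (Fin 2 → K) →ₗ[K] K} {v v' v'' : Fin 2 → K}
    (h1 : Rel f f' v v') (h2 : Rel f' f'' v' v'') : Rel f f'' v v'' := by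
  obtain ⟨g1, hf1, hv1⟩ := h1
  obtain ⟨g2, hf2, hv2⟩ := h2
  refine ⟨g2 * g1, ?_, ?_⟩
  · rw [hf2, hf1, _root_.mul_inv_rev, Matrix.SpecialLinearGroup.coe_mul, Matrix.toLin'_mul,
      ← LinearMap.comp_assoc]
  · rw [hv2, hv1, Matrix.mulVec_mulVec, Matrix.SpecialLinearGroup.coe_mul]

/-- Build an element of SL2 from entries. -/
def mk2 (a b c d : K) (h : a * d - b * c = 1) : SL2 :=
  ⟨!![a, b; c, d], by rw [Matrix.det_fin_two_of]; linear_combination h⟩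

@[simp] lemma mk2_coe (a b c d : K) (h : a * d - b * c = 1) :
    (mk2 a b c d h : Matrix (Fin 2) (Fin 2) K) = !![a, b; c, d] := rfl

lemma mulVec_ex (a b c d : K) (x : Fin 2 → K) :
    (!![a, b; c, d]).mulVec x = ![a * x 0 + b * x 1, c * x 0 + d * x 1] := by
  funext i; fin_cases i <;>
    simp [Matrix.mulVec, dotProduct, Fin.sum_univ_two]

lemma comp_single (f : (Fin 2 → K) →ₗ[K] K) (M : Matrix (Fin 2) (Fin 2) K) (j : Fin 2) :
    (f ∘ₗ Matrix.toLin' M) (Pi.single j 1) = f (fun i => M i j) := by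
  rw [LinearMap.comp_apply, Matrix.toLin'_apply, Matrix.mulVec_single]
  simp
  rfl

/-- f ≠ 0 gives nonvanishing on basis. -/
lemma ne_zero_iff (f : (Fin 2 → K) →ₗ[K] K) :
    f ≠ 0 ↔ ¬ (f (Pi.single 0 1) = 0 ∧ f (Pi.single 1 1) = 0) := by
  constructor
  · rintro hf ⟨h0, h1⟩
    exact hf (ext2 (by simp [h0]) (by simp [h1]))
  · rintro h rfl
    exact h ⟨rfl, rfl⟩

/-- existence of parameter t for v in the kernel. -/
lemma existsT {f : (Fin 2 → K) →ₗ[K] K} {v : Fin 2 → K} (hf : f ≠ 0) (hv : f v = 0) :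
    ∃ t : K, v = t • ![f (Pi.single 1 1), -f (Pi.single 0 1)] := by
  set α := f (Pi.single 0 1) with hα
  set β := f (Pi.single 1 1) with hβ
  have h : v 0 * α + v 1 * β = 0 := by rw [← eval2]; exact hv
  by_cases hb : β = 0
  · have ha : α ≠ 0 := by
      rcases (ne_zero_iff f).1 hf with h'
      intro h0; exact h' ⟨h0, hb⟩
    have h0 : v 0 = 0 := by
      have : v 0 * α = 0 := by rw [hb] at h; linear_combination h
      rcases mul_eq_zero.1 this with h' | h'
      · exact h'
      · exact absurd h' ha
    refine ⟨-(v 1) / α, ?_⟩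
    funext i; fin_cases i
    · simpa [hb] using h0
    · simp [ha]
  · refine ⟨v 0 / β, ?_⟩
    funext i; fin_cases i
    · simp [hb]
    · simp
      field_simp
      linear_combination h

/-- the "kernel vector" transforms by g. -/
lemma wf_transform (g : SL2) (f : (Fin 2 → K) →ₗ[K] K) :
    (![ (f ∘ₗ Matrix.toLin' ((g⁻¹ : SL2) : Matrix (Fin 2) (Fin 2) K)) (Pi.single 1 1),
        -(f ∘ₗ Matrix.toLin' ((g⁻¹ : SL2) : Matrix (Fin 2) (Fin 2) K)) (Pi.single 0 1)])
      = (g : Matrix (Fin 2) (Fin 2) K).mulVec ![f (Pi.single 1 1), -f (Pi.single 0 1)] := by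
  have hinv : ((g⁻¹ : SL2) : Matrix (Fin 2) (Fin 2) K)
      = (g : Matrix (Fin 2) (Fin 2) K).adjugate := Matrix.SpecialLinearGroup.coe_inv g
  set M := (g : Matrix (Fin 2) (Fin 2) K) with hM
  have hadj : M.adjugate = !![M 1 1, -M 0 1; -M 1 0, M 0 0] := Matrix.adjugate_fin_two M
  have h1 : (f ∘ₗ Matrix.toLin' ((g⁻¹ : SL2) : Matrix (Fin 2) (Fin 2) K)) (Pi.single 1 1)
      = f ![-M 0 1, M 0 0] := by
    rw [comp_single, hinv, hadj]
    congr 1; funext i; fin_cases i <;> simp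
  have h0 : (f ∘ₗ Matrix.toLin' ((g⁻¹ : SL2) : Matrix (Fin 2) (Fin 2) K)) (Pi.single 0 1)
      = f ![M 1 1, -M 1 0] := by
    rw [comp_single, hinv, hadj]
    congr 1; funext i; fin_cases i <;> simp
  have hMex : M = !![M 0 0, M 0 1; M 1 0, M 1 1] := by
    funext i j; fin_cases i <;> fin_cases j <;> simp
  rw [h1, h0]
  conv_rhs => rw [hMex, mulVec_ex]
  funext i; fin_cases i <;>
    simp [eval2 f ![-M 0 1, M 0 0], eval2 f ![M 1 1, -M 1 0]] <;> ring

/-- transitivity to normal form: nonzero vector, zero functional -/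
lemma rel_vec {v : Fin 2 → K} (hv : v ≠ 0) :
    Rel (0 : (Fin 2 → K) →ₗ[K] K) 0 (Pi.single 0 1) v := by
  have hv' : ¬ (v 0 = 0 ∧ v 1 = 0) := by
    rintro ⟨h0, h1⟩; exact hv (funext fun i => by fin_cases i <;> simpa)
  by_cases h0 : v 0 ≠ 0
  · refine ⟨mk2 (v 0) 0 (v 1) (1 / v 0) (by field_simp; ring), by rw [LinearMap.zero_comp], ?_⟩
    rw [mk2_coe, Matrix.mulVec_single]
    funext i; fin_cases i <;> simp
  · have h1 : v 1 ≠ 0 := fun h => hv' ⟨not_not.1 h0, h⟩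
    refine ⟨mk2 (v 0) (-(1 / v 1)) (v 1) 0 (by field_simp; ring), by rw [LinearMap.zero_comp], ?_⟩
    rw [mk2_coe, Matrix.mulVec_single]
    funext i; fin_cases i <;> simp

/-- normal form for f v = c ≠ 0: rel (c • proj 0, e₁) (f, v). -/
lemma rel_nfc {f : (Fin 2 → K) →ₗ[K] K} {v : Fin 2 → K} {c : K}
    (hc : c ≠ 0) (hfv : f v = c) :
    Rel (c • LinearMap.proj 0 : (Fin 2 → K) →ₗ[K] K) f (Pi.single 0 1) v := by
  set α := f (Pi.single 0 1) with hα
  set β := f (Pi.single 1 1) with hβ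
  have hdet : v 0 * (α / c) - (-(β / c)) * v 1 = 1 := by
    have h : v 0 * α + v 1 * β = c := by rw [← eval2]; exact hfv
    field_simp
    linear_combination h
  refine ⟨mk2 (v 0) (-(β / c)) (v 1) (α / c) hdet, ?_, ?_⟩
  · set g := mk2 (v 0) (-(β / c)) (v 1) (α / c) hdet with hg
    have key : (c • LinearMap.proj 0 : (Fin 2 → K) →ₗ[K] K)
        = f ∘ₗ Matrix.toLin' (g : Matrix (Fin 2) (Fin 2) K) := by
      refine ext2 ?_ ?_
      · rw [comp_single]
        have : (fun i => (g : Matrix (Fin 2) (Fin 2) K) i 0) = v := by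
          funext i; fin_cases i <;> simp [hg]
        rw [this, hfv]; simp
      · rw [comp_single]
        have : (fun i => (g : Matrix (Fin 2) (Fin 2) K) i 1) = ![-(β / c), α / c] := by
          funext i; fin_cases i <;> simp [hg]
        rw [this, eval2 f]
        have hL : (c • (LinearMap.proj 0 : (Fin 2 → K) →ₗ[K] K)) (Pi.single 1 1) = 0 := by
          simp
        rw [hL]
        simp only [Matrix.cons_val_zero, Matrix.cons_val_one, Matrix.head_cons, ← hα, ← hβ]
        field_simp
        ring
    rw [key]
    exact (comp_cancel' g f).symm
  · rw [mk2_coe, Matrix.mulVec_single]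
    funext i; fin_cases i <;> simp

/-- normal form for the kernel case. -/
lemma rel_nft {f : (Fin 2 → K) →ₗ[K] K} (hf : f ≠ 0) (t : K) :
    Rel (LinearMap.proj 0 : (Fin 2 → K) →ₗ[K] K) f
      (t • ![0, -1]) (t • ![f (Pi.single 1 1), -f (Pi.single 0 1)]) := by
  set α := f (Pi.single 0 1) with hα
  set β := f (Pi.single 1 1) with hβ
  have key : ∀ (g : SL2),
      (LinearMap.proj 0 : (Fin 2 → K) →ₗ[K] K) = f ∘ₗ Matrix.toLin' (g : Matrix (Fin 2) (Fin 2) K) →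
      (g : Matrix (Fin 2) (Fin 2) K).mulVec ![0, -1] = ![β, -α] →
      Rel (LinearMap.proj 0 : (Fin 2 → K) →ₗ[K] K) f
        (t • ![0, -1]) (t • ![f (Pi.single 1 1), -f (Pi.single 0 1)]) := by
    intro g h1 h2
    refine ⟨g, ?_, ?_⟩
    · rw [h1]
      exact (comp_cancel' g f).symm
    · rw [Matrix.mulVec_smul, h2, ← hα, ← hβ]
  by_cases ha : α ≠ 0
  · refine key (mk2 (1/α) (-β) 0 α (by field_simp; ring)) ?_ ?_
    · refine ext2 ?_ ?_
      · rw [comp_single]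
        have hcol : (fun i => ((mk2 (1/α) (-β) 0 α (by field_simp; ring) : SL2) :
            Matrix (Fin 2) (Fin 2) K) i 0) = ![1/α, 0] := by
          funext i; fin_cases i <;> simp
        rw [hcol, eval2 f]
        simp only [Matrix.cons_val_zero, Matrix.cons_val_one, Matrix.head_cons, ← hα, ← hβ]
        field_simp
        simp
      · rw [comp_single]
        have hcol : (fun i => ((mk2 (1/α) (-β) 0 α (by field_simp; ring) : SL2) :
            Matrix (Fin 2) (Fin 2) K) i 1) = ![-β, α] := by
          funext i; fin_cases i <;> simp
        rw [hcol, eval2 f]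
        simp only [Matrix.cons_val_zero, Matrix.cons_val_one, Matrix.head_cons, ← hα, ← hβ]
        simp
        ring
    · rw [mk2_coe, mulVec_ex]
      funext i; fin_cases i <;> simp
  · push_neg at ha
    have hb : β ≠ 0 := by
      intro hb0
      exact (ne_zero_iff f).1 hf ⟨by rw [← hα]; exact ha, by rw [← hβ]; exact hb0⟩
    refine key (mk2 0 (-β) (1/β) 0 (by field_simp; ring)) ?_ ?_
    · refine ext2 ?_ ?_
      · rw [comp_single]
        have hcol : (fun i => ((mk2 0 (-β) (1/β) 0 (by field_simp; ring) : SL2) :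
            Matrix (Fin 2) (Fin 2) K) i 0) = ![0, 1/β] := by
          funext i; fin_cases i <;> simp
        rw [hcol, eval2 f]
        simp only [Matrix.cons_val_zero, Matrix.cons_val_one, Matrix.head_cons, ← hα, ← hβ]
        field_simp
        simp
      · rw [comp_single]
        have hcol : (fun i => ((mk2 0 (-β) (1/β) 0 (by field_simp; ring) : SL2) :
            Matrix (Fin 2) (Fin 2) K) i 1) = ![-β, 0] := by
          funext i; fin_cases i <;> simp
        rw [hcol, eval2 f]
        simp only [Matrix.cons_val_zero, Matrix.cons_val_one, Matrix.head_cons, ← hα, ← hβ]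
        simp [ha]
    · rw [mk2_coe, mulVec_ex]
      funext i; fin_cases i <;> simp [ha]

end SL2Aux

open SL2Aux in
theorem sl2_orbit_functional_vector {K : Type*} [Field K]
    (f f' : (Fin 2 → K) →ₗ[K] K) (v v' : Fin 2 → K) :
    (∃ g : Matrix.SpecialLinearGroup (Fin 2) K,
        f' = f ∘ₗ Matrix.toLin'
            ((g⁻¹ : Matrix.SpecialLinearGroup (Fin 2) K) : Matrix (Fin 2) (Fin 2) K) ∧
        v' = Matrix.mulVec (g : Matrix (Fin 2) (Fin 2) K) v) ↔
      ((f = 0 ↔ f' = 0) ∧ (v = 0 ↔ v' = 0) ∧ f v = f' v' ∧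
        (f ≠ 0 → f v = 0 →
          ∃ t : K, v = t • ![f (Pi.single 1 1), -f (Pi.single 0 1)] ∧
            v' = t • ![f' (Pi.single 1 1), -f' (Pi.single 0 1)])) := by
  constructor
  · rintro ⟨g, hf', hv'⟩
    have hcancel : f = f' ∘ₗ Matrix.toLin' (g : Matrix (Fin 2) (Fin 2) K) := by
      rw [hf']; exact (comp_cancel g f).symm
    have hvback : ((g⁻¹ : Matrix.SpecialLinearGroup (Fin 2) K) :
        Matrix (Fin 2) (Fin 2) K).mulVec v' = v := by
      rw [hv', Matrix.mulVec_mulVec, ← Matrix.SpecialLinearGroup.coe_mul, inv_mul_cancel,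
        Matrix.SpecialLinearGroup.coe_one, Matrix.one_mulVec]
    refine ⟨⟨fun h => by rw [hf', h, LinearMap.zero_comp],
        fun h => by rw [hcancel, h, LinearMap.zero_comp]⟩,
      ⟨fun h => by rw [hv', h, Matrix.mulVec_zero],
        fun h => by rw [← hvback, h, Matrix.mulVec_zero]⟩, ?_, ?_⟩
    · rw [hf', hv']
      simp only [LinearMap.comp_apply, Matrix.toLin'_apply, Matrix.mulVec_mulVec]
      rw [← Matrix.SpecialLinearGroup.coe_mul, inv_mul_cancel,
        Matrix.SpecialLinearGroup.coe_one, Matrix.one_mulVec]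
    · intro hf hfv
      obtain ⟨t, ht⟩ := existsT hf hfv
      refine ⟨t, ht, ?_⟩
      rw [hf', wf_transform g f, hv', ht, Matrix.mulVec_smul]
  · rintro ⟨⟨hf0, hf0'⟩, ⟨hv0, hv0'⟩, hfv, ht⟩
    show Rel f f' v v'
    by_cases hf : f = 0
    · have hf'0 : f' = 0 := hf0 hf
      by_cases hv : v = 0
      · rw [hf, hf'0, hv, hv0 hv]
        exact rel_refl 0 0
      · have hv' : v' ≠ 0 := fun h => hv (hv0' h)
        rw [hf, hf'0]
        exact rel_trans (rel_symm (rel_vec hv)) (rel_vec hv')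
    · have hf' : f' ≠ 0 := fun h => hf (hf0' h)
      by_cases hz : f v = 0
      · have hz' : f' v' = 0 := by rw [← hfv]; exact hz
        obtain ⟨t, ht1, ht2⟩ := ht hf hz
        have h1 : Rel (LinearMap.proj 0 : (Fin 2 → K) →ₗ[K] K) f (t • ![0, -1]) v := by
          rw [ht1]; exact rel_nft hf t
        have h2 : Rel (LinearMap.proj 0 : (Fin 2 → K) →ₗ[K] K) f' (t • ![0, -1]) v' := by
          rw [ht2]; exact rel_nft hf' t
        exact rel_trans (rel_symm h1) h2
      · have h1 : Rel ((f v) • LinearMap.proj 0 : (Fin 2 → K) →ₗ[K] K) f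
            (Pi.single 0 1) v := rel_nfc hz rfl
        have h2 : Rel ((f v) • LinearMap.proj 0 : (Fin 2 → K) →ₗ[K] K) f'
            (Pi.single 0 1) v' := rel_nfc hz hfv.symm
        exact rel_trans (rel_symm h1) h2
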